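/- arXiv:2510.06179 — 2 statements merged into one kernel-verified Lean document; each statement's English description precedes it below -/
import Mathlib

section
/- Let F : ℝ^N × ℝ^p → ℝ^N satisfy the hypotheses of the implicit function theorem at (w₀, θ₀): F is continuously differentiable near (w₀, θ₀), F(w₀, θ₀) = 0, and D_w F(w₀, θ₀) is invertible; let φ be the implicit solution map with φ(θ₀) = w₀ and F(φ(θ), θ) = 0 near θ₀. Assume moreover that the matrix K ∈ ℝ^{N×N} representing D_w F(w₀, θ₀) is symmetric, and let ℓ : ℝ^N → ℝ be differentiable at w₀ with gradient v := ∇ℓ(w₀). Then the composite map θ ↦ ℓ(φ(θ)) is differentiable at θ₀ and its gradient equals −(D_θ F(w₀, θ₀))ᵀ ξ, where ξ ∈ ℝ^N is the unique solution of the single linear system K ξ = v. -/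
open Matrix Filter

/-- Vector-Jacobian-product (VJP) formula: under the implicit function theorem hypotheses at
`(w₀, θ₀)`, with the partial derivative `D_w F(w₀,θ₀)` represented by a symmetric invertible
matrix `K`, `φ` the implicit solution map, and `ℓ` differentiable at `w₀` with gradient `v`,
the map `θ ↦ ℓ (φ θ)` is differentiable at `θ₀` and its gradient is `-(D_θ F)ᵀ ξ`, where `ξ`
is the unique solution of the single linear system `K ξ = v`; i.e. its derivative acts as
`h ↦ -(ξ ⬝ᵥ D_θF(w₀,θ₀) h)`. -/
theorem stmt_2 {N p : ℕ}
    (F : (Fin N → ℝ) × (Fin p → ℝ) → (Fin N → ℝ))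
    (w₀ : Fin N → ℝ) (θ₀ : Fin p → ℝ)
    (F' : ((Fin N → ℝ) × (Fin p → ℝ)) →L[ℝ] (Fin N → ℝ))
    (hF : ContDiffAt ℝ 1 F (w₀, θ₀))
    (hF' : HasFDerivAt F F' (w₀, θ₀))
    (hF0 : F (w₀, θ₀) = 0)
    (K : Matrix (Fin N) (Fin N) ℝ)
    (hK : ∀ u : Fin N → ℝ, F' (u, 0) = K.mulVec u)
    (hKinv : IsUnit K)
    (hKsymm : K.IsSymm)
    (φ : (Fin p → ℝ) → (Fin N → ℝ))
    (hφ₀ : φ θ₀ = w₀)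
    (hφ : ∀ᶠ θ in nhds θ₀, F (φ θ, θ) = 0)
    (hφc : ContinuousAt φ θ₀)
    (ℓ : (Fin N → ℝ) → ℝ)
    (ℓ' : (Fin N → ℝ) →L[ℝ] ℝ)
    (hℓ : HasFDerivAt ℓ ℓ' w₀)
    (v : Fin N → ℝ)
    (hv : ∀ u : Fin N → ℝ, ℓ' u = v ⬝ᵥ u) :
    (∃! ξ : Fin N → ℝ, K.mulVec ξ = v) ∧
      ∀ ξ : Fin N → ℝ, K.mulVec ξ = v →
        ∃ L : (Fin p → ℝ) →L[ℝ] ℝ,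
          HasFDerivAt (fun θ => ℓ (φ θ)) L θ₀ ∧
          ∀ h : Fin p → ℝ, L h = -(ξ ⬝ᵥ F' (0, h)) := by

  classical
  have hdet : IsUnit K.det := (Matrix.isUnit_iff_isUnit_det K).mp hKinv
  have hBK : K⁻¹ * K = 1 := Matrix.nonsing_inv_mul K hdet
  have hKB : K * K⁻¹ = 1 := Matrix.mul_nonsing_inv K hdet
  have hinj : Function.Injective K.mulVec := by
    intro x y hxy
    have := congrArg (K⁻¹.mulVec) hxy
    simpa [Matrix.mulVec_mulVec, hBK] using this
  constructor
  · refine ⟨K⁻¹.mulVec v, ?_, ?_⟩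
    · simp [Matrix.mulVec_mulVec, hKB]
    · intro y hy
      apply hinj
      rw [hy]; simp [Matrix.mulVec_mulVec, hKB]
  intro ξ hξ
  -- the augmented map G and its derivative
  set G : ((Fin N → ℝ) × (Fin p → ℝ)) → ((Fin N → ℝ) × (Fin p → ℝ)) :=
    fun x => (F x, x.2) with hGdef
  set G' : ((Fin N → ℝ) × (Fin p → ℝ)) →L[ℝ] ((Fin N → ℝ) × (Fin p → ℝ)) :=
    F'.prod (ContinuousLinearMap.snd ℝ _ _) with hG'def
  have hG'F : HasFDerivAt G G' (w₀, θ₀) := hF'.prodMk (hasFDerivAt_snd)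
  have hGc : ContDiffAt ℝ 1 G (w₀, θ₀) := hF.prodMk contDiffAt_snd
  have hGstrict : HasStrictFDerivAt G G' (w₀, θ₀) :=
    hGc.hasStrictFDerivAt' hG'F one_ne_zero
  -- F' splits
  have hsplit : ∀ x : (Fin N → ℝ) × (Fin p → ℝ),
      F' x = K.mulVec x.1 + F' (0, x.2) := by
    intro x
    rw [← hK x.1, ← map_add]
    congr 1
    simp
  have hG'inj : Function.Injective G' := by
    intro x y hxy
    have h2' := congrArg Prod.snd hxy
    have h1' := congrArg Prod.fst hxy
    simp only [hG'def, ContinuousLinearMap.prod_apply, ContinuousLinearMap.coe_snd'] at h2' h1'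
    have h2 : x.2 = y.2 := h2'
    have h1 : F' x = F' y := h1'

    rw [hsplit x, hsplit y, h2] at h1
    have : K.mulVec x.1 = K.mulVec y.1 := by
      have := add_right_cancel h1
      exact this
    exact Prod.ext (hinj this) h2
  have hG'bij : Function.Bijective G'.toLinearMap :=
    ⟨hG'inj, (LinearMap.injective_iff_surjective).1 hG'inj⟩
  let G'e : ((Fin N → ℝ) × (Fin p → ℝ)) ≃L[ℝ] ((Fin N → ℝ) × (Fin p → ℝ)) :=
    (LinearEquiv.ofBijective G'.toLinearMap hG'bij).toContinuousLinearEquiv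
  have hG'e : (G'e : ((Fin N → ℝ) × (Fin p → ℝ)) →L[ℝ] _) = G' := by
    ext x <;> rfl
  have hGstrict' : HasStrictFDerivAt G
      (G'e : ((Fin N → ℝ) × (Fin p → ℝ)) →L[ℝ] _) (w₀, θ₀) := by
    rw [hG'e]; exact hGstrict
  set g := hGstrict'.localInverse G G'e (w₀, θ₀) with hgdef
  have hG0 : G (w₀, θ₀) = (0, θ₀) := by simp [hGdef, hF0]
  have hg : HasStrictFDerivAt g
      ((G'e.symm : ((Fin N → ℝ) × (Fin p → ℝ)) →L[ℝ] _)) ((0 : Fin N → ℝ), θ₀) := by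
    rw [← hG0]; exact hGstrict'.to_localInverse
  -- φ agrees with θ ↦ (g (0, θ)).1 near θ₀
  have hφeq : ∀ᶠ θ in nhds θ₀, φ θ = (g (0, θ)).1 := by
    have hten : Filter.Tendsto (fun θ => (φ θ, θ)) (nhds θ₀) (nhds (w₀, θ₀)) := by
      have := hφc.prodMk continuousAt_id
      simpa [ContinuousAt, hφ₀] using this
    have hlinv := hten.eventually hGstrict'.eventually_left_inverse
    filter_upwards [hlinv, hφ] with θ h1 h2
    have : G (φ θ, θ) = (0, θ) := by simp [hGdef, h2]
    rw [this] at h1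
    exact (congrArg Prod.fst h1).symm
  -- the derivative of θ ↦ (g (0, θ)).1
  have hpair : HasFDerivAt (fun θ : Fin p → ℝ => ((0 : Fin N → ℝ), θ))
      (ContinuousLinearMap.inr ℝ (Fin N → ℝ) (Fin p → ℝ)) θ₀ :=
    (ContinuousLinearMap.inr ℝ (Fin N → ℝ) (Fin p → ℝ)).hasFDerivAt
  have hginner : HasFDerivAt (fun θ : Fin p → ℝ => g (0, θ))
      ((G'e.symm : ((Fin N → ℝ) × (Fin p → ℝ)) →L[ℝ] _).comp
        (ContinuousLinearMap.inr ℝ (Fin N → ℝ) (Fin p → ℝ))) θ₀ :=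
    hg.hasFDerivAt.comp θ₀ hpair
  set ψ' : (Fin p → ℝ) →L[ℝ] (Fin N → ℝ) :=
    (ContinuousLinearMap.fst ℝ (Fin N → ℝ) (Fin p → ℝ)).comp
      ((G'e.symm : ((Fin N → ℝ) × (Fin p → ℝ)) →L[ℝ] _).comp
        (ContinuousLinearMap.inr ℝ (Fin N → ℝ) (Fin p → ℝ))) with hψ'def
  have hψ : HasFDerivAt (fun θ => (g (0, θ)).1) ψ' θ₀ :=
    (hasFDerivAt_fst).comp θ₀ hginner
  have hval : (g ((0 : Fin N → ℝ), θ₀)).1 = w₀ := by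
    have := hGstrict'.eventually_left_inverse.self_of_nhds
    rw [hG0] at this
    exact congrArg Prod.fst this
  have hcomp : HasFDerivAt (fun θ => ℓ ((g (0, θ)).1)) (ℓ'.comp ψ') θ₀ := by
    apply HasFDerivAt.comp θ₀ _ hψ
    rw [hval]; exact hℓ
  refine ⟨ℓ'.comp ψ', ?_, ?_⟩
  · apply hcomp.congr_of_eventuallyEq
    filter_upwards [hφeq] with θ h
    rw [h]
  · intro h
    -- let u be the primal part of G'e.symm (0, h)
    set x := G'e.symm ((0 : Fin N → ℝ), h) with hxdef
    have hGx : G' x = ((0 : Fin N → ℝ), h) := by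
      have := G'e.apply_symm_apply ((0 : Fin N → ℝ), h)
      rw [← hG'e]
      exact this
    have hx2 : x.2 = h := congrArg Prod.snd hGx
    have hx1 : F' x = 0 := congrArg Prod.fst hGx
    have hKu1 : K.mulVec x.1 = -(F' (0, h)) := by
      rw [hsplit x, hx2] at hx1
      exact eq_neg_of_add_eq_zero_left hx1
    have hψh : ψ' h = x.1 := rfl
    calc (ℓ'.comp ψ') h = ℓ' x.1 := by rw [ContinuousLinearMap.comp_apply, hψh]
      _ = v ⬝ᵥ x.1 := hv _
      _ = K.mulVec ξ ⬝ᵥ x.1 := by rw [hξ]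
      _ = ξ ⬝ᵥ K.mulVec x.1 := by
          rw [Matrix.dotProduct_mulVec, ← Matrix.mulVec_transpose, hKsymm.eq]
      _ = ξ ⬝ᵥ (-(F' (0, h))) := by rw [hKu1]
      _ = -(ξ ⬝ᵥ F' (0, h)) := dotProduct_neg _ _
end

section
/- Let G be an n×n real symmetric positive definite matrix and let H be an m×n real matrix of full row rank (rank H = m). Then the KKT matrix K = [[G, Hᵀ], [H, 0]] is invertible. -/
open Matrix

/-- If `G` is symmetric positive definite and `H` has full row rank, then the KKT matrix
`[[G, Hᵀ], [H, 0]]` is invertible. -/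
theorem stmt_3 {n m : ℕ} (G : Matrix (Fin n) (Fin n) ℝ) (H : Matrix (Fin m) (Fin n) ℝ)
    (hG : G.PosDef) (hH : H.rank = m) :
    IsUnit (Matrix.fromBlocks G Hᵀ H 0) := by
  -- Hᵀ has trivial kernel
  have hker : LinearMap.ker (Hᵀ.mulVecLin) = ⊥ := by
    have h1 := (Hᵀ.mulVecLin).finrank_range_add_finrank_ker
    have h2 : Hᵀ.rank = m := by rw [Matrix.rank_transpose, hH]
    rw [Matrix.rank] at h2
    rw [h2] at h1
    simp only [Module.finrank_pi, Fintype.card_fin] at h1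
    have : Module.finrank ℝ (LinearMap.ker Hᵀ.mulVecLin) = 0 := by omega
    exact Submodule.finrank_eq_zero.mp this
  rw [← Matrix.mulVec_injective_iff_isUnit]
  intro u v huv
  suffices h : ∀ w : (Fin n ⊕ Fin m) → ℝ,
      Matrix.fromBlocks G Hᵀ H 0 *ᵥ w = 0 → w = 0 by
    have := h (u - v) (by rw [Matrix.mulVec_sub, huv, sub_self])
    exact sub_eq_zero.mp this
  intro w hw
  set x : Fin n → ℝ := w ∘ Sum.inl with hx
  set y : Fin m → ℝ := w ∘ Sum.inr with hy
  have hwe : w = Sum.elim x y := by funext i; cases i <;> rfl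
  rw [hwe, Matrix.fromBlocks_mulVec] at hw
  have eq1 : G *ᵥ x + Hᵀ *ᵥ y = 0 := by
    funext i; exact congrFun hw (Sum.inl i)
  have eq2 : H *ᵥ x = 0 := by
    funext i
    have := congrFun hw (Sum.inr i)
    simpa using this
  -- x = 0
  have hx0 : x = 0 := by
    by_contra hx0
    have hpos := hG.dotProduct_mulVec_pos hx0
    have hdot : x ⬝ᵥ (G *ᵥ x) + x ⬝ᵥ (Hᵀ *ᵥ y) = 0 := by
      rw [← dotProduct_add, eq1, dotProduct_zero]
    have hzero : x ⬝ᵥ (Hᵀ *ᵥ y) = 0 := by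
      rw [dotProduct_mulVec, vecMul_transpose, eq2, zero_dotProduct]
    rw [hzero, add_zero] at hdot
    simp only [star_trivial] at hpos
    exact absurd hdot (ne_of_gt hpos)
  have hy0 : y = 0 := by
    have : Hᵀ *ᵥ y = 0 := by
      rw [hx0, Matrix.mulVec_zero, zero_add] at eq1
      exact eq1
    have hinj := LinearMap.ker_eq_bot.mp hker
    apply hinj
    show Hᵀ.mulVecLin y = Hᵀ.mulVecLin 0
    simp only [Matrix.mulVecLin_apply, Matrix.mulVec_zero]
    exact this
  rw [hwe, hx0, hy0]
  ext i; cases i <;> simp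
end
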